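/- For a line in the unit square [0,1]² given by n·(x − c) = d where c = (1/2, 1/2) is the center, n is a nonzero normal vector, with m = 1 − ‖n‖_∞/‖n‖₁ and d̄ = d/‖n‖₁, the area f of the region on the side of the line opposite to n is given by the piecewise formula: f = 1 if d̄ ≥ 1/2; f = 1 − (d̄ − 1/2)²/(2m(1−m)) if 1/2 − m < d̄ < 1/2; f = 1/2 + d̄/(1−m) if m − 1/2 ≤ d̄ ≤ 1/2 − m; f = (d̄ + 1/2)²/(2m(1−m)) if −1/2 < d̄ < m − 1/2; and f = 0 if d̄ ≤ −1/2. Moreover 0 ≤ f ≤ 1. -/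

import Mathlib

open MeasureTheory Set

def Svof (a b d : ℝ) : Set (ℝ × ℝ) :=
  {p : ℝ × ℝ | p.1 ∈ Set.Icc (0:ℝ) 1 ∧ p.2 ∈ Set.Icc (0:ℝ) 1 ∧
    a * (p.1 - 1/2) + b * (p.2 - 1/2) ≤ d}

lemma Svof_meas (a b d : ℝ) : MeasurableSet (Svof a b d) := by
  have h1 : MeasurableSet {p : ℝ × ℝ | p.1 ∈ Set.Icc (0:ℝ) 1} :=
    measurable_fst measurableSet_Icc
  have h2 : MeasurableSet {p : ℝ × ℝ | p.2 ∈ Set.Icc (0:ℝ) 1} :=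
    measurable_snd measurableSet_Icc
  have h3 : MeasurableSet {p : ℝ × ℝ | a * (p.1 - 1/2) + b * (p.2 - 1/2) ≤ d} := by
    apply measurableSet_le _ measurable_const
    fun_prop
  exact (h1.inter (h2.inter h3) : _)

lemma core_integral (m db : ℝ) (hm0 : 0 ≤ m) (hm : m ≤ 1/2) :
    (volume (Svof m (1-m) db)).toReal
      = ∫ x in (0:ℝ)..1, min 1 (max 0 ((db + 1/2 - m*x)/(1-m))) := by
  have hc : (0:ℝ) < 1 - m := by linarith
  set g : ℝ → ℝ := fun x => (db + 1/2 - m*x)/(1-m) with hg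
  set h : ℝ → ℝ := fun x => min 1 (max 0 (g x)) with hh
  have hgc : Continuous g := by fun_prop
  have hhc : Continuous h := continuous_const.min (continuous_const.max hgc)
  have hslice : ∀ x : ℝ, (Prod.mk x ⁻¹' Svof m (1-m) db) =
      if x ∈ Icc (0:ℝ) 1 then Icc 0 (min 1 (g x)) else ∅ := by
    intro x
    by_cases hx : x ∈ Icc (0:ℝ) 1
    · obtain ⟨hx0, hx1⟩ := hx
      rw [if_pos (mem_Icc.mpr ⟨hx0, hx1⟩)]
      ext y
      simp only [Svof, mem_preimage, mem_setOf_eq, mem_Icc]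
      constructor
      · rintro ⟨-, ⟨hy0, hy1⟩, hle⟩
        refine ⟨hy0, le_min hy1 ?_⟩
        rw [le_div_iff₀ hc]; nlinarith
      · rintro ⟨hy0, hy⟩
        have h1 := min_le_left (1:ℝ) (g x)
        have h2 := min_le_right (1:ℝ) (g x)
        have hgx : y ≤ g x := le_trans hy h2
        rw [le_div_iff₀ hc] at hgx
        exact ⟨⟨hx0, hx1⟩, ⟨hy0, le_trans hy h1⟩, by nlinarith⟩
    · rw [if_neg hx]
      ext y
      simp only [Svof, mem_preimage, mem_setOf_eq, mem_empty_iff_false, iff_false]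
      rintro ⟨hx', -, -⟩
      exact hx hx'
  have hvol : volume (Svof m (1-m) db)
      = ∫⁻ x, volume (Prod.mk x ⁻¹' Svof m (1-m) db) := by
    rw [MeasureTheory.Measure.volume_eq_prod, Measure.prod_apply (Svof_meas _ _ _)]
  have hpt : ∀ x : ℝ, volume (Prod.mk x ⁻¹' Svof m (1-m) db)
      = (Icc (0:ℝ) 1).indicator (fun x => ENNReal.ofReal (h x)) x := by
    intro x
    rw [hslice x]
    by_cases hx : x ∈ Icc (0:ℝ) 1
    · rw [if_pos hx, indicator_of_mem hx, Real.volume_Icc]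
      rcases le_total 0 (g x) with h0 | h0
      · simp only [hh, max_eq_right h0, sub_zero]
      · have : min (1:ℝ) (g x) ≤ 0 := le_trans (min_le_right _ _) h0
        simp only [hh, max_eq_left h0, sub_zero]
        rw [ENNReal.ofReal_eq_zero.mpr this, min_comm, min_eq_left (zero_le_one), ENNReal.ofReal_zero]
    · rw [if_neg hx, indicator_of_notMem hx, measure_empty]
  rw [hvol]
  simp_rw [hpt]
  rw [lintegral_indicator measurableSet_Icc _]
  have hnn : 0 ≤ᵐ[volume.restrict (Icc (0:ℝ) 1)] h := by
    filter_upwards with x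
    exact le_min (by norm_num) (le_max_left _ _)
  have hint : Integrable h (volume.restrict (Icc (0:ℝ) 1)) := hhc.integrableOn_Icc
  rw [← MeasureTheory.ofReal_integral_eq_lintegral_ofReal hint hnn]
  have hnn2 : (0:ℝ) ≤ ∫ x in Icc (0:ℝ) 1, h x :=
    integral_nonneg fun x => le_min (by norm_num) (le_max_left _ _)
  rw [ENNReal.toReal_ofReal hnn2, MeasureTheory.integral_Icc_eq_integral_Ioc,
    ← intervalIntegral.integral_of_le zero_le_one]

lemma int_lin (p q c a b : ℝ) :
    ∫ x in a..b, (p - q*x)/c = (p*(b-a) - q*(b^2-a^2)/2)/c := by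
  rw [intervalIntegral.integral_div,
    intervalIntegral.integral_sub (intervalIntegrable_const)
      (((by fun_prop : Continuous fun x : ℝ => q * x)).intervalIntegrable _ _),
    intervalIntegral.integral_const, intervalIntegral.integral_const_mul,
    integral_id]
  simp only [smul_eq_mul]
  ring

lemma hcont_full (m db : ℝ) : Continuous fun x : ℝ => min 1 (max 0 ((db + 1/2 - m*x)/(1-m))) := by
  apply Continuous.min continuous_const
  apply Continuous.max continuous_const
  fun_prop

lemma core1 (m db : ℝ) (hm0 : 0 ≤ m) (hm : m ≤ 1/2) (h1 : 1/2 ≤ db) :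
    (volume (Svof m (1-m) db)).toReal = 1 := by
  have hc : (0:ℝ) < 1 - m := by linarith
  rw [core_integral m db hm0 hm,
    intervalIntegral.integral_congr (g := fun _ : ℝ => (1:ℝ)) ?_]
  · simp
  · intro x hx
    rw [uIcc_of_le zero_le_one, mem_Icc] at hx
    have hg : (1:ℝ) ≤ (db + 1/2 - m*x)/(1-m) := by
      rw [le_div_iff₀ hc]; nlinarith [hx.1, hx.2]
    exact min_eq_left (le_trans hg (le_max_right _ _))

lemma core5 (m db : ℝ) (hm0 : 0 ≤ m) (hm : m ≤ 1/2) (h1 : db ≤ -(1/2)) :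
    (volume (Svof m (1-m) db)).toReal = 0 := by
  have hc : (0:ℝ) < 1 - m := by linarith
  rw [core_integral m db hm0 hm,
    intervalIntegral.integral_congr (g := fun _ : ℝ => (0:ℝ)) ?_]
  · simp
  · intro x hx
    rw [uIcc_of_le zero_le_one, mem_Icc] at hx
    have hg : (db + 1/2 - m*x)/(1-m) ≤ 0 :=
      div_nonpos_of_nonpos_of_nonneg (by nlinarith [hx.1, hx.2]) hc.le
    simp only [max_eq_left hg, min_eq_right zero_le_one]

lemma core3 (m db : ℝ) (hm0 : 0 ≤ m) (hm : m ≤ 1/2)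
    (h1 : m - 1/2 ≤ db) (h2 : db ≤ 1/2 - m) :
    (volume (Svof m (1-m) db)).toReal = 1/2 + db/(1-m) := by
  have hc : (0:ℝ) < 1 - m := by linarith
  rw [core_integral m db hm0 hm,
    intervalIntegral.integral_congr (g := fun x : ℝ => (db + 1/2 - m*x)/(1-m)) ?_]
  · rw [int_lin]
    field_simp
    ring
  · intro x hx
    rw [uIcc_of_le zero_le_one, mem_Icc] at hx
    have hg0 : 0 ≤ (db + 1/2 - m*x)/(1-m) := by
      apply div_nonneg _ hc.le; nlinarith [hx.1, hx.2]
    have hg1 : (db + 1/2 - m*x)/(1-m) ≤ 1 := by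
      rw [div_le_one hc]; nlinarith [hx.1, hx.2]
    simp only [max_eq_right hg0, min_eq_right hg1]

lemma core2 (m db : ℝ) (hm0 : 0 ≤ m) (hm : m ≤ 1/2)
    (h1 : 1/2 - m < db) (h2 : db < 1/2) :
    (volume (Svof m (1-m) db)).toReal = 1 - (db - 1/2)^2 / (2*m*(1-m)) := by
  have hc : (0:ℝ) < 1 - m := by linarith
  have hmpos : 0 < m := by linarith
  set x₀ : ℝ := (db - 1/2 + m)/m with hx₀
  have hkey : m * x₀ = db - 1/2 + m := by rw [hx₀]; field_simp
  have hx00 : 0 < x₀ := div_pos (by linarith) hmpos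
  have hx01 : x₀ < 1 := by rw [div_lt_one hmpos]; linarith
  rw [core_integral m db hm0 hm]
  have hii : ∀ u v : ℝ, IntervalIntegrable
      (fun x : ℝ => min 1 (max 0 ((db + 1/2 - m*x)/(1-m)))) volume u v :=
    fun u v => (hcont_full m db).intervalIntegrable u v
  rw [← intervalIntegral.integral_add_adjacent_intervals (hii 0 x₀) (hii x₀ 1)]
  have e1 : ∫ x in (0:ℝ)..x₀, min 1 (max 0 ((db + 1/2 - m*x)/(1-m))) = x₀ := by
    rw [intervalIntegral.integral_congr (g := fun _ : ℝ => (1:ℝ)) ?_]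
    · simp
    · intro x hx
      rw [uIcc_of_le hx00.le, mem_Icc] at hx
      have hg : (1:ℝ) ≤ (db + 1/2 - m*x)/(1-m) := by
        rw [le_div_iff₀ hc]
        have : m * x ≤ m * x₀ := by
          apply mul_le_mul_of_nonneg_left hx.2 hm0
        nlinarith
      exact min_eq_left (le_trans hg (le_max_right _ _))
  have e2 : ∫ x in x₀..(1:ℝ), min 1 (max 0 ((db + 1/2 - m*x)/(1-m)))
      = ((db + 1/2)*(1 - x₀) - m*(1^2 - x₀^2)/2)/(1-m) := by
    rw [intervalIntegral.integral_congr (g := fun x : ℝ => (db + 1/2 - m*x)/(1-m)) ?_]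
    · rw [int_lin]
    · intro x hx
      rw [uIcc_of_le hx01.le, mem_Icc] at hx
      have hg0 : 0 ≤ (db + 1/2 - m*x)/(1-m) := by
        apply div_nonneg _ hc.le; nlinarith [hx.1, hx.2]
      have hg1 : (db + 1/2 - m*x)/(1-m) ≤ 1 := by
        rw [div_le_one hc]
        have : m * x₀ ≤ m * x := mul_le_mul_of_nonneg_left hx.1 hm0
        nlinarith
      show min 1 (max 0 _) = _
      simp only [max_eq_right hg0, min_eq_right hg1]
  rw [e1, e2, hx₀]
  field_simp
  ring

lemma core4 (m db : ℝ) (hm0 : 0 ≤ m) (hm : m ≤ 1/2)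
    (h1 : -(1/2) < db) (h2 : db < m - 1/2) :
    (volume (Svof m (1-m) db)).toReal = (db + 1/2)^2 / (2*m*(1-m)) := by
  have hc : (0:ℝ) < 1 - m := by linarith
  have hmpos : 0 < m := by linarith
  set x₁ : ℝ := (db + 1/2)/m with hx₁
  have hkey : m * x₁ = db + 1/2 := by rw [hx₁]; field_simp
  have hx10 : 0 < x₁ := div_pos (by linarith) hmpos
  have hx11 : x₁ < 1 := by rw [div_lt_one hmpos]; linarith
  rw [core_integral m db hm0 hm]
  have hii : ∀ u v : ℝ, IntervalIntegrable
      (fun x : ℝ => min 1 (max 0 ((db + 1/2 - m*x)/(1-m)))) volume u v :=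
    fun u v => (hcont_full m db).intervalIntegrable u v
  rw [← intervalIntegral.integral_add_adjacent_intervals (hii 0 x₁) (hii x₁ 1)]
  have e1 : ∫ x in (0:ℝ)..x₁, min 1 (max 0 ((db + 1/2 - m*x)/(1-m)))
      = ((db + 1/2)*(x₁ - 0) - m*(x₁^2 - 0^2)/2)/(1-m) := by
    rw [intervalIntegral.integral_congr (g := fun x : ℝ => (db + 1/2 - m*x)/(1-m)) ?_]
    · rw [int_lin]
    · intro x hx
      rw [uIcc_of_le hx10.le, mem_Icc] at hx
      have hg0 : 0 ≤ (db + 1/2 - m*x)/(1-m) := by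
        apply div_nonneg _ hc.le
        have : m * x ≤ m * x₁ := mul_le_mul_of_nonneg_left hx.2 hm0
        nlinarith
      have hg1 : (db + 1/2 - m*x)/(1-m) ≤ 1 := by
        rw [div_le_one hc]; nlinarith [hx.1, hx.2]
      show min 1 (max 0 _) = _
      simp only [max_eq_right hg0, min_eq_right hg1]
  have e2 : ∫ x in x₁..(1:ℝ), min 1 (max 0 ((db + 1/2 - m*x)/(1-m))) = 0 := by
    rw [intervalIntegral.integral_congr (g := fun _ : ℝ => (0:ℝ)) ?_]
    · simp
    · intro x hx
      rw [uIcc_of_le hx11.le, mem_Icc] at hx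
      have hg : (db + 1/2 - m*x)/(1-m) ≤ 0 := by
        apply div_nonpos_of_nonpos_of_nonneg _ hc.le
        have : m * x₁ ≤ m * x := mul_le_mul_of_nonneg_left hx.1 hm0
        nlinarith
      show min 1 (max 0 _) = _
      simp only [max_eq_left hg, min_eq_right zero_le_one]
  rw [e1, e2, hx₁]
  field_simp
  ring
lemma vol_refl1 (a b d : ℝ) : volume (Svof a b d) = volume (Svof (-a) b d) := by
  have hφ : MeasurePreserving (fun p : ℝ × ℝ => ((1:ℝ) - p.1, p.2)) volume volume := by
    rw [MeasureTheory.Measure.volume_eq_prod]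
    exact (Measure.measurePreserving_sub_left volume 1).prod (MeasurePreserving.id volume)
  have hpre : (fun p : ℝ × ℝ => ((1:ℝ) - p.1, p.2)) ⁻¹' (Svof a b d) = Svof (-a) b d := by
    ext p
    simp only [Svof, mem_preimage, mem_setOf_eq, mem_Icc]
    have key : a * ((1 - p.1) - 1/2) = -a * (p.1 - 1/2) := by ring
    constructor
    · rintro ⟨⟨h1, h2⟩, hy, h5⟩
      exact ⟨⟨by linarith, by linarith⟩, hy, by linarith [key ▸ h5]⟩
    · rintro ⟨⟨h1, h2⟩, hy, h5⟩
      exact ⟨⟨by linarith, by linarith⟩, hy, by rw [key]; linarith⟩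
  rw [← hpre, hφ.measure_preimage (Svof_meas a b d).nullMeasurableSet]

lemma vol_refl2 (a b d : ℝ) : volume (Svof a b d) = volume (Svof a (-b) d) := by
  have hφ : MeasurePreserving (fun p : ℝ × ℝ => (p.1, (1:ℝ) - p.2)) volume volume := by
    rw [MeasureTheory.Measure.volume_eq_prod]
    exact (MeasurePreserving.id volume).prod (Measure.measurePreserving_sub_left volume 1)
  have hpre : (fun p : ℝ × ℝ => (p.1, (1:ℝ) - p.2)) ⁻¹' (Svof a b d) = Svof a (-b) d := by
    ext p
    simp only [Svof, mem_preimage, mem_setOf_eq, mem_Icc]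
    have key : b * ((1 - p.2) - 1/2) = -b * (p.2 - 1/2) := by ring
    constructor
    · rintro ⟨hx, ⟨h1, h2⟩, h5⟩
      exact ⟨hx, ⟨by linarith, by linarith⟩, by linarith [key ▸ h5]⟩
    · rintro ⟨hx, ⟨h1, h2⟩, h5⟩
      exact ⟨hx, ⟨by linarith, by linarith⟩, by rw [key]; linarith⟩
  rw [← hpre, hφ.measure_preimage (Svof_meas a b d).nullMeasurableSet]

lemma vol_swap (a b d : ℝ) : volume (Svof a b d) = volume (Svof b a d) := by
  have hφ : MeasurePreserving (Prod.swap : ℝ × ℝ → ℝ × ℝ) volume volume := by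
    rw [MeasureTheory.Measure.volume_eq_prod]
    exact Measure.measurePreserving_swap
  have hpre : (Prod.swap : ℝ × ℝ → ℝ × ℝ) ⁻¹' (Svof a b d) = Svof b a d := by
    ext p
    simp only [Svof, mem_preimage, mem_setOf_eq, Prod.fst_swap, Prod.snd_swap]
    constructor
    · rintro ⟨h1, h2, h3⟩
      exact ⟨h2, h1, by linarith⟩
    · rintro ⟨h1, h2, h3⟩
      exact ⟨h2, h1, by linarith⟩
  rw [← hpre, hφ.measure_preimage (Svof_meas a b d).nullMeasurableSet]

lemma Svof_scale (a b d s : ℝ) (hs : 0 < s) : Svof a b d = Svof (a/s) (b/s) (d/s) := by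
  ext p
  simp only [Svof, mem_setOf_eq]
  refine and_congr_right fun _ => and_congr_right fun _ => ?_
  have key : a/s * (p.1 - 1/2) + b/s * (p.2 - 1/2)
      = (a * (p.1 - 1/2) + b * (p.2 - 1/2))/s := by ring
  rw [key]
  exact (div_le_div_iff_of_pos_right hs).symm
lemma half (a b d : ℝ) (ha : 0 ≤ a) (hab : a ≤ b) (hb : 0 < b) (mm dd : ℝ)
    (hmm : mm = 1 - b/(a+b)) (hdd : dd = d/(a+b)) :
    (1/2 ≤ dd → (volume (Svof a b d)).toReal = 1) ∧
    (1/2 - mm < dd → dd < 1/2 →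
      (volume (Svof a b d)).toReal = 1 - (dd - 1/2)^2 / (2*mm*(1-mm))) ∧
    (mm - 1/2 ≤ dd → dd ≤ 1/2 - mm →
      (volume (Svof a b d)).toReal = 1/2 + dd/(1-mm)) ∧
    (-(1/2) < dd → dd < mm - 1/2 →
      (volume (Svof a b d)).toReal = (dd + 1/2)^2 / (2*mm*(1-mm))) ∧
    (dd ≤ -(1/2) → (volume (Svof a b d)).toReal = 0) := by
  have hs : 0 < a + b := by linarith
  have hmm' : mm = a/(a+b) := by
    rw [hmm]
    field_simp
    ring
  have h2 : b/(a+b) = 1 - mm := by rw [hmm]; ring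
  have hset : Svof a b d = Svof mm (1-mm) dd := by
    rw [Svof_scale a b d (a+b) hs, ← hmm', h2, ← hdd]
  have hm0 : 0 ≤ mm := by
    rw [hmm']; positivity
  have hm : mm ≤ 1/2 := by
    rw [hmm', div_le_iff₀ hs]; linarith
  rw [hset]
  exact ⟨core1 mm dd hm0 hm, core2 mm dd hm0 hm, core3 mm dd hm0 hm,
    core4 mm dd hm0 hm, core5 mm dd hm0 hm⟩

/-- Piecewise formula for the area cut off a unit square by a line
`n · (x - (1/2,1/2)) = d`, in terms of `m = 1 - ‖n‖∞/‖n‖₁` and `d̄ = d/‖n‖₁`,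
together with the bound `0 ≤ f ≤ 1`. -/
theorem vof_unit_cell_area_formula (n1 n2 d : ℝ) (hn : (n1, n2) ≠ (0, 0)) :
    let f : ℝ := (volume {p : ℝ × ℝ | p.1 ∈ Set.Icc (0:ℝ) 1 ∧ p.2 ∈ Set.Icc (0:ℝ) 1 ∧
      n1 * (p.1 - 1/2) + n2 * (p.2 - 1/2) ≤ d}).toReal
    let m : ℝ := 1 - max |n1| |n2| / (|n1| + |n2|)
    let db : ℝ := d / (|n1| + |n2|)
    (1/2 ≤ db → f = 1) ∧
    (1/2 - m < db → db < 1/2 → f = 1 - (db - 1/2)^2 / (2 * m * (1 - m))) ∧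
    (m - 1/2 ≤ db → db ≤ 1/2 - m → f = 1/2 + db / (1 - m)) ∧
    (-(1/2) < db → db < m - 1/2 → f = (db + 1/2)^2 / (2 * m * (1 - m))) ∧
    (db ≤ -(1/2) → f = 0) ∧
    0 ≤ f ∧ f ≤ 1 := by
  intro f m db
  have hne : n1 ≠ 0 ∨ n2 ≠ 0 := by
    by_contra h
    push_neg at h
    exact hn (by simp [h.1, h.2])
  have hboth : 0 < |n1| + |n2| := by
    rcases hne with h | h
    · have := abs_pos.mpr h
      have := abs_nonneg n2
      linarith
    · have := abs_pos.mpr h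
      have := abs_nonneg n1
      linarith
  have hS : volume (Svof n1 n2 d) = volume (Svof |n1| |n2| d) := by
    rcases le_or_gt 0 n1 with h1 | h1 <;> rcases le_or_gt 0 n2 with h2 | h2
    · rw [abs_of_nonneg h1, abs_of_nonneg h2]
    · rw [abs_of_nonneg h1, abs_of_neg h2]
      exact vol_refl2 n1 n2 d
    · rw [abs_of_neg h1, abs_of_nonneg h2]
      exact vol_refl1 n1 n2 d
    · rw [abs_of_neg h1, abs_of_neg h2]
      exact (vol_refl1 n1 n2 d).trans (vol_refl2 (-n1) n2 d)
  have hf : f = (volume (Svof n1 n2 d)).toReal := rfl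
  have hfub : f ≤ 1 := by
    rw [hf]
    have hsub : Svof n1 n2 d ⊆ Icc (0:ℝ) 1 ×ˢ Icc (0:ℝ) 1 := fun p hp => ⟨hp.1, hp.2.1⟩
    have hvol : volume (Icc (0:ℝ) 1 ×ˢ Icc (0:ℝ) 1) = 1 := by
      rw [MeasureTheory.Measure.volume_eq_prod, Measure.prod_prod, Real.volume_Icc]
      simp
    have hle : volume (Svof n1 n2 d) ≤ volume (Icc (0:ℝ) 1 ×ˢ Icc (0:ℝ) 1) :=
      measure_mono hsub
    rw [hvol] at hle
    calc (volume (Svof n1 n2 d)).toReal ≤ (1:ENNReal).toReal :=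
          ENNReal.toReal_mono (by simp) hle
      _ = 1 := by simp
  rcases le_total |n1| |n2| with hab | hab
  · have hbpos : 0 < |n2| := by
      have := abs_nonneg n1
      linarith
    have hmeq : m = 1 - |n2| / (|n1| + |n2|) := by
      rw [show m = 1 - max |n1| |n2| / (|n1| + |n2|) from rfl, max_eq_right hab]
    have hdbeq : db = d / (|n1| + |n2|) := rfl
    obtain ⟨c1, c2, c3, c4, c5⟩ :=
      half |n1| |n2| d (abs_nonneg n1) hab hbpos m db hmeq hdbeq
    rw [← hS] at c1 c2 c3 c4 c5
    exact ⟨c1, c2, c3, c4, c5, ENNReal.toReal_nonneg, hfub⟩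
  · have hapos : 0 < |n1| := by
      have := abs_nonneg n2
      linarith
    have hmeq : m = 1 - |n1| / (|n2| + |n1|) := by
      rw [show m = 1 - max |n1| |n2| / (|n1| + |n2|) from rfl, max_eq_left hab, add_comm]
    have hdbeq : db = d / (|n2| + |n1|) := by
      rw [show db = d / (|n1| + |n2|) from rfl, add_comm]
    have hS' : volume (Svof n1 n2 d) = volume (Svof |n2| |n1| d) :=
      hS.trans (vol_swap |n1| |n2| d)
    obtain ⟨c1, c2, c3, c4, c5⟩ :=
      half |n2| |n1| d (abs_nonneg n2) hab hapos m db hmeq hdbeq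
    rw [← hS'] at c1 c2 c3 c4 c5
    exact ⟨c1, c2, c3, c4, c5, ENNReal.toReal_nonneg, hfub⟩
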